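/- arXiv:2406.10805 — 2 statements merged into one kernel-verified Lean document; each statement's English description precedes it below -/
import Mathlib

section
/- For every μ > 0, the hazard rate function h(x) = g(x)/(1 - G(x)) of SSLUD(μ) is monotone nondecreasing on the interval [-μ, ∞); that is, SSLUD(μ) has increasing failure rate (IFR). -/
open MeasureTheory Real

noncomputable def g (μ : ℝ) (x : ℝ) : ℝ :=
  if x < -μ then 0
  else if x < μ then Real.exp (-|x|) * (x / (2 * μ) + 1 / 2)
  else Real.exp (-x)

noncomputable def G (μ : ℝ) (x : ℝ) : ℝ := ∫ t in Set.Iic x, g μ t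

lemma g_meas (μ : ℝ) : Measurable (g μ) := by
  unfold g
  apply Measurable.ite (measurableSet_lt measurable_id measurable_const) measurable_const
  apply Measurable.ite (measurableSet_lt measurable_id measurable_const) <;> fun_prop

lemma g_bound {μ : ℝ} (hμ : 0 < μ) (x : ℝ) : ‖g μ x‖ ≤ 1 := by
  unfold g
  split_ifs with h1 h2
  · simp
  · push_neg at h1
    have e1 : Real.exp (-|x|) ≤ 1 := Real.exp_le_one_iff.2 (neg_nonpos.2 (abs_nonneg x))
    have e2 : (0:ℝ) < Real.exp (-|x|) := Real.exp_pos _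
    have f1 : 0 ≤ x / (2*μ) + 1/2 := by
      have : -(1/2 : ℝ) ≤ x / (2*μ) := by
        rw [le_div_iff₀ (by linarith)]; linarith
      linarith
    have f2 : x / (2*μ) + 1/2 ≤ 1 := by
      have : x / (2*μ) ≤ 1/2 := by
        rw [div_le_iff₀ (by linarith)]; linarith
      linarith
    rw [Real.norm_eq_abs, abs_mul, abs_of_pos e2, abs_of_nonneg f1]
    calc Real.exp (-|x|) * (x / (2*μ) + 1/2) ≤ 1 * 1 := by
          apply mul_le_mul e1 f2 f1 zero_le_one
      _ = 1 := by ring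
  · push_neg at h1 h2
    rw [Real.norm_eq_abs, abs_of_pos (Real.exp_pos _)]
    exact Real.exp_le_one_iff.2 (by linarith)

lemma g_intOn {μ : ℝ} (hμ : 0 < μ) (a b : ℝ) : IntervalIntegrable (g μ) volume a b := by
  constructor <;>
  · apply Measure.integrableOn_of_bounded (M := 1) measure_Ioc_lt_top.ne
      (g_meas μ).aestronglyMeasurable
    exact ae_of_all _ fun x => g_bound hμ x

lemma g_eq_zero {μ : ℝ} (hμ : 0 < μ) {t : ℝ} (h : t ≤ -μ) : g μ t = 0 := by
  unfold g
  by_cases h1 : t < -μ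
  · rw [if_pos h1]
  · have ht : t = -μ := le_antisymm h (not_lt.1 h1)
    subst ht
    rw [if_neg h1, if_pos (by linarith), abs_of_nonpos (by linarith)]
    have : -μ / (2*μ) + 1/2 = 0 := by field_simp; ring
    rw [this, mul_zero]

lemma g_eq_neg {μ : ℝ} (hμ : 0 < μ) {t : ℝ} (h1 : -μ ≤ t) (h2 : t ≤ 0) :
    g μ t = Real.exp t * (t / (2*μ) + 1/2) := by
  unfold g
  rw [if_neg (not_lt.2 h1), if_pos (lt_of_le_of_lt h2 hμ), abs_of_nonpos h2, neg_neg]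

lemma g_eq_pos {μ : ℝ} (hμ : 0 < μ) {t : ℝ} (h1 : 0 ≤ t) (h2 : t ≤ μ) :
    g μ t = Real.exp (-t) * (t / (2*μ) + 1/2) := by
  unfold g
  rw [if_neg (by push_neg; linarith)]
  by_cases h : t < μ
  · rw [if_pos h, abs_of_nonneg h1]
  · rw [if_neg h]
    have ht : t = μ := le_antisymm h2 (not_lt.1 h)
    subst ht
    have : t / (2*t) + 1/2 = 1 := by field_simp; ring
    rw [this, mul_one]

lemma g_eq_big {μ : ℝ} (hμ : 0 < μ) {t : ℝ} (h : μ ≤ t) : g μ t = Real.exp (-t) := by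
  unfold g
  rw [if_neg (by push_neg; linarith), if_neg (not_lt.2 h)]

lemma G_eq {μ : ℝ} (hμ : 0 < μ) {x : ℝ} (hx : -μ ≤ x) :
    G μ x = ∫ t in (-μ)..x, g μ t := by
  unfold G
  rw [← Set.Iic_union_Ioc_eq_Iic hx]
  have hzero : Set.EqOn (g μ) 0 (Set.Iic (-μ)) := fun t ht => g_eq_zero hμ ht
  rw [setIntegral_union (Set.Iic_disjoint_Ioc le_rfl) measurableSet_Ioc
      ((integrableOn_zero).congr_fun hzero.symm measurableSet_Iic)
      ((g_intOn hμ (-μ) x).1)]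
  rw [setIntegral_congr_fun measurableSet_Iic hzero]
  simp [intervalIntegral.integral_of_le hx]

lemma int_neg {μ : ℝ} (hμ : 0 < μ) {a b : ℝ} (ha : -μ ≤ a) (hab : a ≤ b) (hb : b ≤ 0) :
    ∫ t in a..b, g μ t =
      (Real.exp b * ((b-1)/(2*μ) + 1/2)) - (Real.exp a * ((a-1)/(2*μ) + 1/2)) := by
  rw [intervalIntegral.integral_congr (g := fun t => Real.exp t * (t/(2*μ) + 1/2))
      (fun t ht => by
        rw [Set.uIcc_of_le hab] at ht
        exact g_eq_neg hμ (le_trans ha ht.1) (le_trans ht.2 hb))]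
  apply intervalIntegral.integral_eq_sub_of_hasDerivAt
  · intro t _
    have h := (Real.hasDerivAt_exp t).mul
      ((((hasDerivAt_id t).sub_const 1).div_const (2*μ)).add_const (1/2 : ℝ))
    refine h.congr_deriv ?_
    simp only [id_eq]
    ring
  · apply Continuous.intervalIntegrable
    fun_prop

lemma int_pos {μ : ℝ} (hμ : 0 < μ) {a b : ℝ} (ha : 0 ≤ a) (hab : a ≤ b) (hb : b ≤ μ) :
    ∫ t in a..b, g μ t =
      (-(Real.exp (-b)) * ((b+1)/(2*μ) + 1/2)) - (-(Real.exp (-a)) * ((a+1)/(2*μ) + 1/2)) := by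
  rw [intervalIntegral.integral_congr (g := fun t => Real.exp (-t) * (t/(2*μ) + 1/2))
      (fun t ht => by
        rw [Set.uIcc_of_le hab] at ht
        exact g_eq_pos hμ (le_trans ha ht.1) (le_trans ht.2 hb))]
  apply intervalIntegral.integral_eq_sub_of_hasDerivAt
  · intro t _
    have hexp : HasDerivAt (fun t : ℝ => Real.exp (-t)) (-(Real.exp (-t))) t := by
      simpa [Function.comp_def] using (Real.hasDerivAt_exp (-t)).comp t (hasDerivAt_neg t)
    have h := (hexp.neg).mul
      ((((hasDerivAt_id t).add_const 1).div_const (2*μ)).add_const (1/2 : ℝ))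
    refine h.congr_deriv ?_
    simp only [id_eq, Pi.neg_apply]
    ring
  · apply Continuous.intervalIntegrable
    fun_prop

lemma int_big {μ : ℝ} (hμ : 0 < μ) {a b : ℝ} (ha : μ ≤ a) (hab : a ≤ b) :
    ∫ t in a..b, g μ t = (-(Real.exp (-b))) - (-(Real.exp (-a))) := by
  rw [intervalIntegral.integral_congr (g := fun t => Real.exp (-t))
      (fun t ht => by
        rw [Set.uIcc_of_le hab] at ht
        exact g_eq_big hμ (le_trans ha ht.1))]
  apply intervalIntegral.integral_eq_sub_of_hasDerivAt
  · intro t _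
    have hexp : HasDerivAt (fun t : ℝ => Real.exp (-t)) (-(Real.exp (-t))) t := by
      simpa [Function.comp_def] using (Real.hasDerivAt_exp (-t)).comp t (hasDerivAt_neg t)
    exact hexp.neg.congr_deriv (neg_neg _)
  · apply Continuous.intervalIntegrable
    fun_prop

lemma G_neg {μ : ℝ} (hμ : 0 < μ) {x : ℝ} (hx1 : -μ ≤ x) (hx2 : x ≤ 0) :
    G μ x = Real.exp x * ((x-1)/(2*μ) + 1/2) + Real.exp (-μ)/(2*μ) := by
  rw [G_eq hμ hx1, int_neg hμ le_rfl hx1 hx2]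
  have : Real.exp (-μ) * ((-μ-1)/(2*μ) + 1/2) = -(Real.exp (-μ)/(2*μ)) := by
    field_simp; ring
  rw [this]; ring

lemma G_pos {μ : ℝ} (hμ : 0 < μ) {x : ℝ} (hx1 : 0 ≤ x) (hx2 : x ≤ μ) :
    G μ x = 1 + Real.exp (-μ)/(2*μ) - Real.exp (-x) * ((x+1)/(2*μ) + 1/2) := by
  rw [G_eq hμ (by linarith),
    ← intervalIntegral.integral_add_adjacent_intervals (g_intOn hμ (-μ) 0) (g_intOn hμ 0 x),
    int_neg hμ le_rfl (by linarith) le_rfl, int_pos hμ le_rfl hx1 hx2]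
  have h1 : Real.exp (-μ) * ((-μ-1)/(2*μ) + 1/2) = -(Real.exp (-μ)/(2*μ)) := by
    field_simp; ring
  rw [h1, Real.exp_zero, neg_zero, Real.exp_zero]
  field_simp
  ring

lemma G_big {μ : ℝ} (hμ : 0 < μ) {x : ℝ} (hx : μ ≤ x) :
    G μ x = 1 - Real.exp (-x) := by
  rw [G_eq hμ (by linarith),
    ← intervalIntegral.integral_add_adjacent_intervals (g_intOn hμ (-μ) μ) (g_intOn hμ μ x),
    ← G_eq hμ (by linarith : -μ ≤ μ), G_pos hμ hμ.le le_rfl, int_big hμ le_rfl hx]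
  field_simp
  ring

lemma h_pos {μ : ℝ} (hμ : 0 < μ) {x : ℝ} (hx1 : 0 ≤ x) (hx2 : x ≤ μ) :
    g μ x / (1 - G μ x) = (x + μ) / (x + μ + 1 - Real.exp (x - μ)) := by
  rw [g_eq_pos hμ hx1 hx2, G_pos hμ hx1 hx2]
  have key : Real.exp (-x) * Real.exp (x - μ) = Real.exp (-μ) := by
    rw [← Real.exp_add]; ring_nf
  have e1 : Real.exp (-x) * (x/(2*μ) + 1/2) = (Real.exp (-x)/(2*μ)) * (x + μ) := by
    field_simp
  have e2 : 1 - (1 + Real.exp (-μ)/(2*μ) - Real.exp (-x) * ((x+1)/(2*μ) + 1/2))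
      = (Real.exp (-x)/(2*μ)) * (x + μ + 1 - Real.exp (x - μ)) := by
    rw [← key]; field_simp; ring
  rw [e1, e2, mul_div_mul_left _ _ (by positivity)]

lemma h_neg {μ : ℝ} (hμ : 0 < μ) {x : ℝ} (hx1 : -μ ≤ x) (hx2 : x ≤ 0) :
    g μ x / (1 - G μ x)
      = (x + μ) / ((2*μ - Real.exp (-μ)) * Real.exp (-x) + 1 - μ - x) := by
  rw [g_eq_neg hμ hx1 hx2, G_neg hμ hx1 hx2]
  have key : Real.exp x * Real.exp (-x) = 1 := by
    rw [← Real.exp_add]; simp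
  have e1 : Real.exp x * (x/(2*μ) + 1/2) = (Real.exp x/(2*μ)) * (x + μ) := by
    field_simp
  have e2 : 1 - (Real.exp x * ((x-1)/(2*μ) + 1/2) + Real.exp (-μ)/(2*μ))
      = (Real.exp x/(2*μ)) * ((2*μ - Real.exp (-μ)) * Real.exp (-x) + 1 - μ - x) := by
    have hinv : μ * μ⁻¹ = 1 := mul_inv_cancel₀ (ne_of_gt hμ)
    linear_combination (-(2*μ - Real.exp (-μ))/(2*μ)) * key
      + (Real.exp x / 2 - 1) * hinv
  rw [e1, e2, mul_div_mul_left _ _ (by positivity)]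

lemma h_big {μ : ℝ} (hμ : 0 < μ) {x : ℝ} (hx : μ ≤ x) :
    g μ x / (1 - G μ x) = 1 := by
  rw [g_eq_big hμ hx, G_big hμ hx]
  have : (1:ℝ) - (1 - Real.exp (-x)) = Real.exp (-x) := by ring
  rw [this, div_self (ne_of_gt (Real.exp_pos _))]

lemma mono_pos {μ : ℝ} (hμ : 0 < μ) :
    MonotoneOn (fun x : ℝ => (x + μ) / (x + μ + 1 - Real.exp (x - μ))) (Set.Icc 0 μ) := by
  have hden : ∀ x ∈ Set.Icc (0:ℝ) μ, 0 < x + μ + 1 - Real.exp (x - μ) := by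
    intro x hx
    have h1 : Real.exp (x - μ) ≤ 1 := Real.exp_le_one_iff.2 (by linarith [hx.2])
    linarith [hx.1]
  have hder : ∀ x ∈ Set.Ioo (0:ℝ) μ, HasDerivAt
      (fun x : ℝ => (x + μ) / (x + μ + 1 - Real.exp (x - μ)))
      ((1 * (x + μ + 1 - Real.exp (x - μ)) - (x + μ) * (1 - Real.exp (x - μ) * 1))
        / (x + μ + 1 - Real.exp (x - μ))^2) x := by
    intro x hx
    have hd0 : x + μ + 1 - Real.exp (x - μ) ≠ 0 :=
      ne_of_gt (hden x ⟨hx.1.le, hx.2.le⟩)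
    have hnum : HasDerivAt (fun x : ℝ => x + μ) 1 x := (hasDerivAt_id x).add_const μ
    have hden' : HasDerivAt (fun x : ℝ => x + μ + 1 - Real.exp (x - μ))
        (1 - Real.exp (x - μ) * 1) x := by
      exact (((hasDerivAt_id x).add_const μ).add_const 1).sub
        (((hasDerivAt_id x).sub_const μ).exp)
    exact hnum.div hden' hd0
  apply monotoneOn_of_deriv_nonneg (convex_Icc 0 μ)
  · apply ContinuousOn.div (by fun_prop) (by fun_prop)
    exact fun x hx => ne_of_gt (hden x hx)
  · rw [interior_Icc]
    exact fun x hx => (hder x hx).differentiableAt.differentiableWithinAt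
  · rw [interior_Icc]
    intro x hx
    rw [(hder x hx).deriv]
    apply div_nonneg _ (sq_nonneg _)
    have h1 : Real.exp (x - μ) ≤ 1 := Real.exp_le_one_iff.2 (by linarith [hx.2])
    have h2 : 0 < Real.exp (x - μ) := Real.exp_pos _
    nlinarith [hx.1, hμ]

lemma mono_neg {μ : ℝ} (hμ : 0 < μ) :
    MonotoneOn (fun x : ℝ => (x + μ) / ((2*μ - Real.exp (-μ)) * Real.exp (-x) + 1 - μ - x))
      (Set.Icc (-μ) 0) := by
  have hden : ∀ x ∈ Set.Icc (-μ) (0:ℝ),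
      0 < (2*μ - Real.exp (-μ)) * Real.exp (-x) + 1 - μ - x := by
    intro x hx
    have h1 : -x + 1 ≤ Real.exp (-x) := Real.add_one_le_exp (-x)
    have h2 : Real.exp (-μ) * Real.exp (-x) ≤ 1 := by
      rw [← Real.exp_add]
      exact Real.exp_le_one_iff.2 (by linarith [hx.1])
    nlinarith [hx.1, hx.2, hμ, Real.exp_pos (-x)]
  have hder : ∀ x ∈ Set.Ioo (-μ) (0:ℝ), HasDerivAt
      (fun x : ℝ => (x + μ) / ((2*μ - Real.exp (-μ)) * Real.exp (-x) + 1 - μ - x))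
      ((1 * ((2*μ - Real.exp (-μ)) * Real.exp (-x) + 1 - μ - x)
          - (x + μ) * ((2*μ - Real.exp (-μ)) * (-(Real.exp (-x))) - 1))
        / ((2*μ - Real.exp (-μ)) * Real.exp (-x) + 1 - μ - x)^2) x := by
    intro x hx
    have hd0 : (2*μ - Real.exp (-μ)) * Real.exp (-x) + 1 - μ - x ≠ 0 :=
      ne_of_gt (hden x ⟨hx.1.le, hx.2.le⟩)
    have hnum : HasDerivAt (fun x : ℝ => x + μ) 1 x := (hasDerivAt_id x).add_const μ
    have hexp : HasDerivAt (fun x : ℝ => Real.exp (-x)) (-(Real.exp (-x))) x := by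
      simpa [Function.comp_def] using (Real.hasDerivAt_exp (-x)).comp x (hasDerivAt_neg x)
    have hden' : HasDerivAt
        (fun x : ℝ => (2*μ - Real.exp (-μ)) * Real.exp (-x) + 1 - μ - x)
        ((2*μ - Real.exp (-μ)) * (-(Real.exp (-x))) - 1) x := by
      have := (((hexp.const_mul (2*μ - Real.exp (-μ))).add_const 1).sub_const μ).sub
        (hasDerivAt_id x)
      exact this
    exact hnum.div hden' hd0
  apply monotoneOn_of_deriv_nonneg (convex_Icc (-μ) 0)
  · apply ContinuousOn.div (by fun_prop) (by fun_prop)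
    exact fun x hx => ne_of_gt (hden x hx)
  · rw [interior_Icc]
    exact fun x hx => (hder x hx).differentiableAt.differentiableWithinAt
  · rw [interior_Icc]
    intro x hx
    rw [(hder x hx).deriv]
    apply div_nonneg _ (sq_nonneg _)
    -- numerator = (2μ - e^{-μ}) e^{-x} (1 + x + μ) + 1
    have hkey : Real.exp (-μ) * Real.exp (-x) * (1 + x + μ) ≤ 1 := by
      have h1 : Real.exp (-μ) * Real.exp (-x) = Real.exp (-(μ + x)) := by
        rw [← Real.exp_add]
        congr 1
        ring
      rw [h1]
      have h2 : 1 + x + μ ≤ Real.exp (μ + x) := by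
        have := Real.add_one_le_exp (μ + x); linarith
      calc Real.exp (-(μ+x)) * (1 + x + μ)
          ≤ Real.exp (-(μ+x)) * Real.exp (μ+x) := by
            apply mul_le_mul_of_nonneg_left h2 (Real.exp_pos _).le
        _ = 1 := by rw [← Real.exp_add, neg_add_cancel, Real.exp_zero]
    have hpos : 0 ≤ 2*μ * Real.exp (-x) * (1 + x + μ) := by
      have : 0 ≤ 1 + x + μ := by linarith [hx.1]
      positivity
    nlinarith [hkey, hpos]

theorem sslud_ifr (μ : ℝ) (hμ : 0 < μ) :
    MonotoneOn (fun x : ℝ => g μ x / (1 - G μ x)) (Set.Ici (-μ)) := by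
  set h : ℝ → ℝ := fun x => g μ x / (1 - G μ x) with hh
  have M1 : MonotoneOn h (Set.Icc (-μ) 0) :=
    (mono_neg hμ).congr fun x hx => (h_neg hμ hx.1 hx.2).symm
  have M2 : MonotoneOn h (Set.Icc 0 μ) :=
    (mono_pos hμ).congr fun x hx => (h_pos hμ hx.1 hx.2).symm
  intro x hx y hy hxy
  simp only [Set.mem_Ici] at hx hy
  rcases le_or_gt y 0 with hy0 | hy0
  · exact M1 ⟨hx, by linarith⟩ ⟨hy, hy0⟩ hxy
  rcases le_or_gt x 0 with hx0 | hx0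
  · have hx0' : h x ≤ h 0 := M1 ⟨hx, hx0⟩ ⟨by linarith, le_rfl⟩ hx0
    rcases le_or_gt y μ with hyμ | hyμ
    · exact le_trans hx0' (M2 ⟨le_rfl, hμ.le⟩ ⟨hy0.le, hyμ⟩ hy0.le)
    · have h0μ : h 0 ≤ h μ := M2 ⟨le_rfl, hμ.le⟩ ⟨hμ.le, le_rfl⟩ hμ.le
      have hμv : h μ = 1 := h_big hμ le_rfl
      have hyv : h y = 1 := h_big hμ hyμ.le
      rw [hyv]; rw [hμv] at h0μ; linarith
  · rcases le_or_gt y μ with hyμ | hyμ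
    · exact M2 ⟨hx0.le, by linarith⟩ ⟨by linarith, hyμ⟩ hxy
    · rcases le_or_gt x μ with hxμ | hxμ
      · have hxv : h x ≤ h μ := M2 ⟨hx0.le, hxμ⟩ ⟨hμ.le, le_rfl⟩ hxμ
        have hμv : h μ = 1 := h_big hμ le_rfl
        have hyv : h y = 1 := h_big hμ hyμ.le
        rw [hyv]; rw [hμv] at hxv; linarith
      · show g μ x / (1 - G μ x) ≤ g μ y / (1 - G μ y)
        rw [h_big hμ hxμ.le, h_big hμ hyμ.le]
end

section
/- For every μ > 0 and every real a with 0 ≤ a < μ, the mean deviation of SSLUD(μ) about a satisfies ∫_{ℝ} |x - a| · g(x) dx = (a/μ) e^{-μ} + (a/μ + 2/μ + 1) e^{-a} + (a - 2/μ). -/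
open MeasureTheory Real

lemma hasDerivAt_quad_exp (A B C s x : ℝ) :
    HasDerivAt (fun x => (A * x ^ 2 + B * x + C) * Real.exp (s * x))
      ((2 * A * x + B + s * (A * x ^ 2 + B * x + C)) * Real.exp (s * x)) x := by
  have h1 : HasDerivAt (fun x : ℝ => A * x ^ 2 + B * x + C) (2 * A * x + B) x := by
    have := (((hasDerivAt_pow 2 x).const_mul A).add ((hasDerivAt_id x).const_mul B)).add_const C
    refine this.congr_deriv ?_; simp; ring
  have h2 : HasDerivAt (fun x : ℝ => Real.exp (s * x)) (s * Real.exp (s * x)) x := by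
    simpa [Function.comp_def, mul_comm] using (Real.hasDerivAt_exp (s * x)).comp x ((hasDerivAt_id x).const_mul s)
  refine (h1.mul h2).congr_deriv ?_; ring

lemma quad_exp_integral (A B C s l r : ℝ) :
    ∫ x in l..r, (2 * A * x + B + s * (A * x ^ 2 + B * x + C)) * Real.exp (s * x)
      = (A * r ^ 2 + B * r + C) * Real.exp (s * r)
        - (A * l ^ 2 + B * l + C) * Real.exp (s * l) := by
  apply intervalIntegral.integral_eq_sub_of_hasDerivAt
  · exact fun x _ => hasDerivAt_quad_exp A B C s x
  · apply Continuous.intervalIntegrable; continuity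

set_option maxHeartbeats 1000000 in
theorem sslud_mean_deviation_mid (μ : ℝ) (hμ : 0 < μ) (a : ℝ) (h1 : 0 ≤ a) (h2 : a < μ) :
    (∫ x : ℝ, |x - a| * g μ x) =
      (a / μ) * Real.exp (-μ) + (a / μ + 2 / μ + 1) * Real.exp (-a) + (a - 2 / μ) := by
  have hμ0 : μ ≠ 0 := ne_of_gt hμ
  set f : ℝ → ℝ := fun x => |x - a| * g μ x with hf
  set φ : ℝ → ℝ := fun x => |x - a| * (Real.exp (-|x|) * (x / (2 * μ) + 1 / 2)) with hφ
  have hφc : Continuous φ := by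
    apply Continuous.mul (by continuity)
    exact Continuous.mul (by continuity) (by continuity)
  -- f = φ on Icc (-μ) μ
  have hfφ : ∀ x ∈ Set.Icc (-μ) μ, f x = φ x := by
    intro x hx
    rcases hx with ⟨hx1, hx2⟩
    simp only [hf, g]
    rcases lt_or_ge x μ with h | h
    · rw [if_neg (not_lt.mpr hx1), if_pos h]
    · have hxμ : x = μ := le_antisymm hx2 h
      rw [if_neg (not_lt.mpr hx1), if_neg (not_lt.mpr h)]
      simp only [hφ]
      rw [hxμ, abs_of_pos hμ]
      have : μ / (2 * μ) + 1 / 2 = 1 := by field_simp; ring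
      rw [this, mul_one]
  -- f on Ioi μ equals (x - a) * exp (-x)
  have hfIoi : ∀ x ∈ Set.Ioi μ, f x = (x - a) * Real.exp (-x) := by
    intro x hx
    have hx : μ < x := hx
    simp only [hf, g, if_neg (not_lt.mpr (by linarith : -μ ≤ x)),
      if_neg (not_lt.mpr hx.le)]
    rw [abs_of_pos (by linarith : 0 < x - a)]
  -- improper piece
  have hF : ∀ x : ℝ, HasDerivAt (fun x => -((x - a + 1) * Real.exp (-x)))
      ((x - a) * Real.exp (-x)) x := by
    intro x
    have := hasDerivAt_quad_exp 0 (-1) (a - 1) (-1) x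
    convert this using 2 <;> ring_nf
  have htend : Filter.Tendsto (fun x : ℝ => -((x - a + 1) * Real.exp (-x)))
      Filter.atTop (nhds 0) := by
    have h1 := Real.tendsto_pow_mul_exp_neg_atTop_nhds_zero 1
    have h2 := Real.tendsto_exp_neg_atTop_nhds_zero
    have : Filter.Tendsto (fun x : ℝ => -(x ^ 1 * Real.exp (-x) + (1 - a) * Real.exp (-x)))
        Filter.atTop (nhds (-(0 + (1 - a) * 0))) := (h1.add (h2.const_mul _)).neg
    simp only [neg_zero, mul_zero, add_zero] at this
    convert this using 2 with x; ring
  have hnonneg : ∀ x ∈ Set.Ioi μ, 0 ≤ (x - a) * Real.exp (-x) := fun x hx =>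
    mul_nonneg (by simp only [Set.mem_Ioi] at hx; linarith) (Real.exp_pos _).le
  have hcontF : ContinuousWithinAt (fun x => -((x - a + 1) * Real.exp (-x))) (Set.Ici μ) μ :=
    ((hF μ).continuousAt).continuousWithinAt
  have hintIoi : IntegrableOn f (Set.Ioi μ) := by
    apply (integrableOn_Ioi_deriv_of_nonneg hcontF (fun x hx => hF x) hnonneg htend).congr_fun
      (fun x hx => (hfIoi x hx).symm) measurableSet_Ioi
  have hIoi : ∫ x in Set.Ioi μ, f x = (μ - a + 1) * Real.exp (-μ) := by
    rw [setIntegral_congr_fun measurableSet_Ioi hfIoi]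
    rw [integral_Ioi_of_hasDerivAt_of_nonneg hcontF (fun x hx => hF x) hnonneg htend]
    ring
  have hintIoc : IntegrableOn f (Set.Ioc (-μ) μ) := by
    apply (hφc.integrableOn_Ioc).congr_fun
      (fun x hx => (hfφ x (Set.Ioc_subset_Icc_self hx)).symm) measurableSet_Ioc
  -- whole line
  have step1 : (∫ x : ℝ, f x) = ∫ x in Set.Ioi (-μ), f x := by
    refine (setIntegral_eq_integral_of_forall_compl_eq_zero fun x hx => ?_).symm
    simp only [Set.mem_Ioi, not_lt] at hx
    simp only [hf, g]
    rcases lt_or_eq_of_le hx with h | h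
    · rw [if_pos h, mul_zero]
    · subst h
      rw [if_neg (lt_irrefl _), if_pos (by linarith)]
      have : -μ / (2 * μ) + 1 / 2 = 0 := by field_simp; ring
      rw [this, mul_zero, mul_zero]
  have step2 : ∫ x in Set.Ioi (-μ), f x
      = (∫ x in Set.Ioc (-μ) μ, f x) + ∫ x in Set.Ioi μ, f x := by
    rw [← Set.Ioc_union_Ioi_eq_Ioi (by linarith : -μ ≤ μ)]
    exact setIntegral_union (Set.Ioc_disjoint_Ioi le_rfl) measurableSet_Ioi hintIoc hintIoi
  have step3 : ∫ x in Set.Ioc (-μ) μ, f x = ∫ x in (-μ)..μ, φ x := by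
    rw [setIntegral_congr_fun measurableSet_Ioc
      (fun x hx => hfφ x (Set.Ioc_subset_Icc_self hx))]
    rw [intervalIntegral.integral_of_le (by linarith : -μ ≤ μ)]
  have hii : ∀ u v : ℝ, IntervalIntegrable φ volume u v :=
    fun u v => hφc.intervalIntegrable u v
  have split : ∫ x in (-μ)..μ, φ x
      = (∫ x in (-μ)..(0:ℝ), φ x) + (∫ x in (0:ℝ)..a, φ x) + ∫ x in a..μ, φ x := by
    rw [← intervalIntegral.integral_add_adjacent_intervals (hii (-μ) 0) (hii 0 μ),
      ← intervalIntegral.integral_add_adjacent_intervals (hii 0 a) (hii a μ)]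
    ring
  -- Piece 1 : on [-μ,0]
  have p1 : ∫ x in (-μ)..(0:ℝ), φ x
      = (a / 2 - a / (2 * μ) + 1 / 2 - 1 / μ)
        + (1 / 2 + a / (2 * μ) + 1 / μ) * Real.exp (-μ) := by
    rw [intervalIntegral.integral_congr (g :=
      fun x => (2 * (-(1 / (2 * μ))) * x + (a / (2 * μ) - 1 / 2 + 1 / μ)
        + 1 * (-(1 / (2 * μ)) * x ^ 2 + (a / (2 * μ) - 1 / 2 + 1 / μ) * x
          + (a / 2 - a / (2 * μ) + 1 / 2 - 1 / μ))) * Real.exp (1 * x)) ?_]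
    · rw [quad_exp_integral]
      rw [show (1 : ℝ) * (-μ) = -μ by ring, show (1 : ℝ) * 0 = (0:ℝ) by ring]
      rw [Real.exp_zero]
      field_simp
      ring
    · intro x hx
      rw [Set.uIcc_of_le (by linarith : -μ ≤ 0)] at hx
      rcases hx with ⟨hx1, hx2⟩
      simp only [hφ]
      rw [abs_of_nonpos (by linarith : x - a ≤ 0), abs_of_nonpos hx2]
      rw [neg_neg, show Real.exp x = Real.exp (1 * x) by ring_nf]
      ring
  -- Piece 2 : on [0,a]
  have p2 : ∫ x in (0:ℝ)..a, φ x
      = (a / (2 * μ) + 1 / 2 + 1 / μ) * Real.exp (-a)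
        + (a / 2 + a / (2 * μ) - 1 / 2 - 1 / μ) := by
    rw [intervalIntegral.integral_congr (g :=
      fun x => (2 * (1 / (2 * μ)) * x + (1 / μ - a / (2 * μ) + 1 / 2)
        + (-1) * ((1 / (2 * μ)) * x ^ 2 + (1 / μ - a / (2 * μ) + 1 / 2) * x
          + (1 / μ - a / (2 * μ) + 1 / 2 - a / 2))) * Real.exp ((-1) * x)) ?_]
    · rw [quad_exp_integral]
      rw [show (-1 : ℝ) * a = -a by ring, show (-1 : ℝ) * 0 = (0:ℝ) by ring]
      rw [Real.exp_zero]
      field_simp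
      ring
    · intro x hx
      rw [Set.uIcc_of_le h1] at hx
      rcases hx with ⟨hx1, hx2⟩
      simp only [hφ]
      rw [abs_of_nonpos (by linarith : x - a ≤ 0), abs_of_nonneg hx1]
      rw [show Real.exp (-x) = Real.exp ((-1) * x) by ring_nf]
      ring
  -- Piece 3 : on [a,μ]
  have p3 : ∫ x in a..μ, φ x
      = (a / (2 * μ) + 1 / 2 + 1 / μ) * Real.exp (-a)
        - (μ - a + 3 / 2 - a / (2 * μ) + 1 / μ) * Real.exp (-μ) := by
    rw [intervalIntegral.integral_congr (g :=
      fun x => (2 * (-(1 / (2 * μ))) * x + (a / (2 * μ) - 1 / 2 - 1 / μ)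
        + (-1) * (-(1 / (2 * μ)) * x ^ 2 + (a / (2 * μ) - 1 / 2 - 1 / μ) * x
          + (a / 2 + a / (2 * μ) - 1 / 2 - 1 / μ))) * Real.exp ((-1) * x)) ?_]
    · rw [quad_exp_integral]
      rw [show (-1 : ℝ) * a = -a by ring, show (-1 : ℝ) * μ = -μ by ring]
      field_simp
      ring
    · intro x hx
      rw [Set.uIcc_of_le (le_of_lt h2)] at hx
      rcases hx with ⟨hx1, hx2⟩
      simp only [hφ]
      rw [abs_of_nonneg (by linarith : 0 ≤ x - a), abs_of_nonneg (by linarith : (0:ℝ) ≤ x)]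
      rw [show Real.exp (-x) = Real.exp ((-1) * x) by ring_nf]
      ring
  rw [step1, step2, step3, split, hIoi, p1, p2, p3]
  field_simp
  ring
end
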